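/- Let S be a numerical semigroup with m(S) − ν(S) ≥ 3. Then w_2 < f(S). -/

import Mathlib

/-- A numerical semigroup: an additive submonoid of `ℕ` (containing `0`, closed under
addition) whose complement in `ℕ` is finite. -/
structure NumericalSemigroup where
  carrier : Set ℕ
  zero_mem : 0 ∈ carrier
  add_mem : ∀ ⦃a b : ℕ⦄, a ∈ carrier → b ∈ carrier → a + b ∈ carrier
  cofinite : (carrierᶜ : Set ℕ).Finite

namespace NumericalSemigroup

/-- The multiplicity `m(S)`: the smallest positive element of `S`. -/
noncomputable def mult (S : NumericalSemigroup) : ℕ :=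
  sInf {s : ℕ | s ∈ S.carrier ∧ 0 < s}

/-- The embedding dimension `ν(S)`: the cardinality of the (unique) minimal system of
generators of `S`, i.e. the least cardinality of a generating set. -/
noncomputable def embdim (S : NumericalSemigroup) : ℕ :=
  sInf {n : ℕ | ∃ G : Finset ℕ,
    S.carrier = (AddSubmonoid.closure (G : Set ℕ) : Set ℕ) ∧ G.card = n}

/-- The Frobenius number `f(S)`: the largest integer not belonging to `S`. -/
noncomputable def frob (S : NumericalSemigroup) : ℤ :=
  sSup {x : ℤ | ∀ s ∈ S.carrier, (s : ℤ) ≠ x}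

/-- `n(S)`: the number of elements of `S` smaller than the Frobenius number. -/
noncomputable def small (S : NumericalSemigroup) : ℕ :=
  {s : ℕ | s ∈ S.carrier ∧ (s : ℤ) < S.frob}.ncard

/-- The type `t(S)`: the number of pseudo-Frobenius numbers of `S`, i.e. integers
`x ∉ S` such that `x + s ∈ S` for every nonzero `s ∈ S`. -/
noncomputable def typ (S : NumericalSemigroup) : ℕ :=
  {x : ℤ | (∀ s ∈ S.carrier, (s : ℤ) ≠ x) ∧
    ∀ s ∈ S.carrier, 0 < s → ∃ u ∈ S.carrier, (u : ℤ) = x + s}.ncard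

/-- The `k`-th interval `I_k = [k·m, (k+1)·m - 1]` (for a given `m`). -/
def interval (m k : ℕ) : Set ℕ := Set.Ico (k * m) ((k + 1) * m)

/-- `n_k`: the number of elements of `S ∩ I_k` smaller than the Frobenius number. -/
noncomputable def nk (S : NumericalSemigroup) (k : ℕ) : ℕ :=
  {s : ℕ | s ∈ S.carrier ∩ interval S.mult k ∧ (s : ℤ) < S.frob}.ncard

/-- `L = ⌊f(S)/m(S)⌋`. -/
noncomputable def Lindex (S : NumericalSemigroup) : ℤ := S.frob / (S.mult : ℤ)

/-- `ρ = f(S) + 1 - L·m(S)`. -/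
noncomputable def rho (S : NumericalSemigroup) : ℤ :=
  S.frob + 1 - S.Lindex * (S.mult : ℤ)

/-- The Apéry set `Ap(S) = {w ∈ S : w - m(S) ∉ S}`. -/
def apery (S : NumericalSemigroup) : Set ℕ :=
  {w : ℕ | w ∈ S.carrier ∧ ∀ u ∈ S.carrier, u + S.mult ≠ w}

theorem apery_finite (S : NumericalSemigroup) : S.apery.Finite := by
  apply Set.Finite.subset ((Set.finite_Iio S.mult).union (S.cofinite.image (· + S.mult)))
  intro x hx
  by_cases h : x < S.mult
  · exact Or.inl h
  · refine Or.inr ⟨x - S.mult, fun hmem => hx.2 _ hmem (by omega), ?_⟩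
    show x - S.mult + S.mult = x
    omega

/-- `w j`: the `(j+1)`-st smallest element of the Apéry set, so that
`Ap(S) = {w 0 < w 1 < ... < w (m-1)}` with `w 0 = 0`. -/
noncomputable def w (S : NumericalSemigroup) (j : ℕ) : ℕ :=
  (S.apery_finite.toFinset.sort (· ≤ ·)).getD j 0

/-- `ε_j`: the number of `k ∈ {0, ..., L-1}` such that `|I_k ∩ S| = j`. -/
noncomputable def eps (S : NumericalSemigroup) (j : ℕ) : ℕ :=
  {k : ℕ | (k : ℤ) < S.Lindex ∧ (S.carrier ∩ interval S.mult k).ncard = j}.ncard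

/-- `η_j`: the number of `k ∈ ℕ` such that `|I_k ∩ S| = j`. -/
noncomputable def eta (S : NumericalSemigroup) (j : ℕ) : ℕ :=
  {k : ℕ | (S.carrier ∩ interval S.mult k).ncard = j}.ncard

lemma exists_bound (S : NumericalSemigroup) : ∃ B : ℕ, ∀ x, B ≤ x → x ∈ S.carrier := by
  obtain ⟨B, hB⟩ := S.cofinite.bddAbove
  refine ⟨B + 1, fun x hx => ?_⟩
  by_contra hc
  exact absurd (hB hc) (by omega)

lemma mult_mem (S : NumericalSemigroup) : S.mult ∈ S.carrier ∧ 0 < S.mult := by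
  obtain ⟨B, hB⟩ := S.exists_bound
  have h : sInf {s : ℕ | s ∈ S.carrier ∧ 0 < s} ∈ {s : ℕ | s ∈ S.carrier ∧ 0 < s} :=
    Nat.sInf_mem ⟨B + 1, hB _ (Nat.le_succ _), Nat.succ_pos _⟩
  exact h

lemma mult_le (S : NumericalSemigroup) {x : ℕ} (hx : x ∈ S.carrier) (h0 : 0 < x) :
    S.mult ≤ x := Nat.sInf_le ⟨hx, h0⟩

lemma card_apery (S : NumericalSemigroup) : S.mult ≤ S.apery_finite.toFinset.card := by
  obtain ⟨B, hB⟩ := S.exists_bound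
  have hm := S.mult_mem
  set m := S.mult with hmdef
  set g : ℕ → ℕ := fun r => sInf {x | x ∈ S.carrier ∧ x % m = r} with hg
  have hne : ∀ r < m, {x | x ∈ S.carrier ∧ x % m = r}.Nonempty := by
    intro r hr
    refine ⟨(B + 1) * m + r, hB _ (by nlinarith [hm.2]), ?_⟩
    rw [mul_comm, Nat.mul_add_mod, Nat.mod_eq_of_lt hr]
  have hgmem : ∀ r < m, g r ∈ S.carrier ∧ g r % m = r := fun r hr => Nat.sInf_mem (hne r hr)
  have hgap : ∀ r < m, g r ∈ S.apery := by
    intro r hr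
    refine ⟨(hgmem r hr).1, fun u hu hc => ?_⟩
    have h1 : u % m = r := by
      have h2 := (hgmem r hr).2
      rw [← hc, Nat.add_mod_right] at h2
      exact h2
    have h3 : g r ≤ u := Nat.sInf_le ⟨hu, h1⟩
    have := hm.2
    omega
  calc m = (Finset.range m).card := (Finset.card_range m).symm
    _ ≤ S.apery_finite.toFinset.card := by
        refine Finset.card_le_card_of_injOn g
          (fun r hr => ?_) (fun r hr r' hr' he => ?_)
        · rw [Finset.mem_coe, Set.Finite.mem_toFinset]
          exact hgap r (Finset.mem_range.mp hr)
        · have h1 := (hgmem r (Finset.mem_range.mp (by simpa using hr))).2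
          have h2 := (hgmem r' (Finset.mem_range.mp (by simpa using hr'))).2
          rw [← h1, ← h2, he]

/-- The submonoid with carrier `S.carrier`. -/
def toAddSubmonoid (S : NumericalSemigroup) : AddSubmonoid ℕ where
  carrier := S.carrier
  add_mem' := fun ha hb => S.add_mem ha hb
  zero_mem' := S.zero_mem

lemma generating_set (S : NumericalSemigroup) :
    S.carrier =
      (AddSubmonoid.closure ((insert S.mult S.apery_finite.toFinset : Finset ℕ) : Set ℕ) : Set ℕ) := by
  set G0 : Finset ℕ := insert S.mult S.apery_finite.toFinset with hG0
  apply Set.eq_of_subset_of_subset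
  · intro x hx
    induction x using Nat.strong_induction_on with
    | _ x ih =>
      by_cases hap : x ∈ S.apery
      · exact AddSubmonoid.subset_closure
          (by simp [hG0, Set.Finite.mem_toFinset, hap])
      · have hex : ∃ u ∈ S.carrier, u + S.mult = x := by
          by_contra hc
          push_neg at hc
          exact hap ⟨hx, hc⟩
        obtain ⟨u, hu, he⟩ := hex
        have hm0 := S.mult_mem.2
        have hu' : u ∈ AddSubmonoid.closure (G0 : Set ℕ) := ih u (by omega) hu
        have hmm : S.mult ∈ AddSubmonoid.closure (G0 : Set ℕ) :=
          AddSubmonoid.subset_closure (by simp [hG0])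
        rw [← he]
        exact AddSubmonoid.add_mem _ hu' hmm
  · intro x hx
    have hle : AddSubmonoid.closure (G0 : Set ℕ) ≤ S.toAddSubmonoid := by
      rw [AddSubmonoid.closure_le]
      intro y hy
      simp only [hG0, Finset.coe_insert, Set.mem_insert_iff, Finset.mem_coe,
        Set.Finite.mem_toFinset] at hy
      rcases hy with rfl | hy
      · exact S.mult_mem.1
      · exact hy.1
    exact hle hx

lemma embdim_spec (S : NumericalSemigroup) : ∃ G : Finset ℕ,
    S.carrier = (AddSubmonoid.closure (G : Set ℕ) : Set ℕ) ∧ G.card = S.embdim := by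
  have h : S.embdim ∈ {n : ℕ | ∃ G : Finset ℕ,
      S.carrier = (AddSubmonoid.closure (G : Set ℕ) : Set ℕ) ∧ G.card = n} :=
    Nat.sInf_mem ⟨_, insert S.mult S.apery_finite.toFinset, S.generating_set, rfl⟩
  exact h

lemma closure_decomp {G : Finset ℕ} {x : ℕ} (hx : x ∈ AddSubmonoid.closure (G : Set ℕ)) :
    x = 0 ∨ ∃ g ∈ G, ∃ y ∈ AddSubmonoid.closure (G : Set ℕ), x = g + y := by
  induction hx using AddSubmonoid.closure_induction with
  | mem y hy => exact Or.inr ⟨y, hy, 0, AddSubmonoid.zero_mem _, (add_zero y).symm⟩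
  | zero => exact Or.inl rfl
  | add a b ha hb pa pb =>
      rcases pa with rfl | ⟨g, hg, y, hy, rfl⟩
      · rw [zero_add]; exact pb
      · exact Or.inr ⟨g, hg, y + b, AddSubmonoid.add_mem _ hy hb, by omega⟩

theorem w_two_lt_frob_aux (S : NumericalSemigroup)
    (h : 3 ≤ S.mult - S.embdim) :
    (S.w 2 : ℤ) < S.frob := by
  classical
  obtain ⟨B, hB⟩ := S.exists_bound
  have hm := S.mult_mem
  set m := S.mult with hmdef
  obtain ⟨G, hG, hGcard⟩ := S.embdim_spec
  set ν := S.embdim with hν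
  -- 0 ∉ G
  have h0G : (0 : ℕ) ∉ G := by
    intro h0
    have hE : AddSubmonoid.closure ((G.erase 0 : Finset ℕ) : Set ℕ)
        = AddSubmonoid.closure (G : Set ℕ) := by
      apply le_antisymm
      · refine AddSubmonoid.closure_mono (fun y hy => ?_)
        exact Finset.mem_coe.mpr (Finset.mem_of_mem_erase (Finset.mem_coe.mp hy))
      · rw [AddSubmonoid.closure_le]
        intro y hy
        rcases eq_or_ne y 0 with rfl | hne
        · exact AddSubmonoid.zero_mem _
        · exact AddSubmonoid.subset_closure
            (Finset.mem_coe.mpr (Finset.mem_erase.mpr ⟨hne, Finset.mem_coe.mp hy⟩))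
    have hle : S.embdim ≤ (G.erase 0).card :=
      Nat.sInf_le ⟨G.erase 0, by rw [hG, hE], rfl⟩
    rw [Finset.card_erase_of_mem h0] at hle
    have hpos : 0 < G.card := Finset.card_pos.mpr ⟨0, h0⟩
    omega
  have hmν : ν + 3 ≤ m := by
    have : ν ≤ m ∨ m < ν := le_or_gt _ _
    omega
  -- the set N of nonzero non-generator Apéry elements
  set Ap := S.apery_finite.toFinset with hAp
  have hcardAp : m ≤ Ap.card := S.card_apery
  set N := Ap \ insert 0 G with hN
  have hNcard : 2 ≤ N.card := by
    have h1 := Finset.le_card_sdiff (insert 0 G) Ap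
    have h2 : (insert 0 G).card ≤ G.card + 1 := Finset.card_insert_le _ _
    have h3 : N.card = (Ap \ insert 0 G).card := by rw [hN]
    omega
  -- m is not in the Apéry set
  have hmAp : m ∉ S.apery := fun hap => hap.2 0 S.zero_mem (zero_add m)
  -- every element of N is a sum of two nonzero Apéry elements
  have hdecomp : ∀ x ∈ N, ∃ u v : ℕ, u ∈ S.apery ∧ v ∈ S.apery ∧ u ≠ 0 ∧ v ≠ 0 ∧ x = u + v := by
    intro x hxN
    rw [hN, Finset.mem_sdiff, Finset.mem_insert, hAp, Set.Finite.mem_toFinset] at hxN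
    push_neg at hxN
    obtain ⟨hxAp, hx0, hxG⟩ := hxN
    have hxS : x ∈ AddSubmonoid.closure (G : Set ℕ) := by
      have := hxAp.1; rwa [hG] at this
    rcases closure_decomp hxS with rfl | ⟨g, hg, y, hy, rfl⟩
    · exact absurd rfl hx0
    · have hyS : y ∈ S.carrier := by rw [hG]; exact hy
      have hgS : g ∈ S.carrier := by rw [hG]; exact AddSubmonoid.subset_closure hg
      have hg0 : g ≠ 0 := fun hh => h0G (hh ▸ hg)
      have hy0 : y ≠ 0 := fun hh => hxG (by rw [hh, add_zero]; exact hg)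
      have key : ∀ u v : ℕ, u ∈ S.carrier → v ∈ S.carrier → u + v ∈ S.apery → u ∈ S.apery := by
        intro u v hu hv huv
        refine ⟨hu, fun t ht hc => ?_⟩
        exact huv.2 (t + v) (S.add_mem ht hv) (by omega)
      have hgAp : g ∈ S.apery := key g y hgS hyS hxAp
      have hyAp : y ∈ S.apery := key y g hyS hgS (by rwa [add_comm])
      exact ⟨g, y, hgAp, hyAp, hg0, hy0, rfl⟩
  -- sorted list facts
  set l := S.apery_finite.toFinset.sort (· ≤ ·) with hl
  have hsort : l.SortedLT := Finset.sortedLT_sort _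
  have hlen : l.length = Ap.card := Finset.length_sort _
  have hlen3 : 3 ≤ l.length := by omega
  have hmem_l : ∀ x : ℕ, x ∈ l ↔ x ∈ S.apery := by
    intro x; rw [hl, Finset.mem_sort, Set.Finite.mem_toFinset]
  have hwl : ∀ j, S.w j = l.getD j 0 := fun j => rfl
  have hkey : ∀ j, j < l.length → ∀ x ∈ S.apery, (∀ i, i < j → x ≠ l.getD i 0) →
      l.getD j 0 ≤ x := by
    intro j hj x hx hne
    obtain ⟨k, hk⟩ := List.mem_iff_get.mp ((hmem_l x).mpr hx)
    have hjk : j ≤ k.1 := by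
      by_contra hlt
      push_neg at hlt
      refine hne k.1 hlt ?_
      rw [List.getD_eq_getElem l 0 (by omega), ← List.get_eq_getElem, hk]
    calc l.getD j 0 = l.get ⟨j, hj⟩ := by
          rw [List.getD_eq_getElem l 0 hj, List.get_eq_getElem]
      _ ≤ l.get k := hsort.strictMono_get.monotone (Fin.le_def.mpr hjk)
      _ = x := hk
  have hgetAp : ∀ j, j < l.length → l.getD j 0 ∈ S.apery := by
    intro j hj
    rw [List.getD_eq_getElem l 0 hj]
    exact (hmem_l _).mp (List.getElem_mem hj)
  -- w 0 = 0
  have h0Ap : (0 : ℕ) ∈ S.apery := ⟨S.zero_mem, fun u hu hc => by omega⟩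
  have hw0 : l.getD 0 0 = 0 :=
    Nat.le_zero.mp (hkey 0 (by omega) 0 h0Ap (by omega))
  -- w 1
  have hw1Ap : l.getD 1 0 ∈ S.apery := hgetAp 1 (by omega)
  have hw1pos : 0 < l.getD 1 0 := by
    have h01 : l.get ⟨0, by omega⟩ < l.get ⟨1, by omega⟩ :=
      hsort.strictMono_get (Fin.mk_lt_mk.mpr (by omega))
    have h01' : l.getD 0 0 < l.getD 1 0 := by
      rw [List.getD_eq_getElem l 0 (by omega : (0:ℕ) < l.length),
        List.getD_eq_getElem l 0 (by omega : (1:ℕ) < l.length)]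
      simpa [List.get_eq_getElem] using h01
    omega
  have hw1m : m < l.getD 1 0 := by
    have h1 : m ≤ l.getD 1 0 := S.mult_le hw1Ap.1 hw1pos
    have h2 : l.getD 1 0 ≠ m := fun hh => hmAp (hh ▸ hw1Ap)
    omega
  have hA : ∀ x ∈ S.apery, x ≠ 0 → l.getD 1 0 ≤ x := by
    intro x hx hx0
    refine hkey 1 (by omega) x hx (fun i hi => ?_)
    interval_cases i
    rw [hw0]; exact hx0
  have hB2 : ∀ x ∈ S.apery, x ≠ 0 → x ≠ l.getD 1 0 → l.getD 2 0 ≤ x := by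
    intro x hx hx0 hx1
    refine hkey 2 (by omega) x hx (fun i hi => ?_)
    interval_cases i
    · rw [hw0]; exact hx0
    · exact hx1
  -- pick two distinct elements of N
  obtain ⟨b0, hb0, c0, hc0, hbc0⟩ := Finset.one_lt_card.mp hNcard
  have main : ∀ b c : ℕ, b ∈ N → c ∈ N → b < c → (S.w 2 : ℤ) < S.frob := by
    intro b c hb hc hlt
    obtain ⟨u, v, huAp, hvAp, hu0, hv0, hbe⟩ := hdecomp b hb
    obtain ⟨u', v', huAp', hvAp', hu0', hv0', hce⟩ := hdecomp c hc
    have hble : l.getD 1 0 + l.getD 1 0 ≤ b := by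
      have h1 := hA u huAp hu0
      have h2 := hA v hvAp hv0
      omega
    have hcge : l.getD 1 0 + l.getD 2 0 ≤ c := by
      by_cases hv' : v' = l.getD 1 0
      · have hu'' : u' ≠ l.getD 1 0 := by
          intro hh
          rw [hce, hh, hv'] at hlt
          omega
        have h1 := hB2 u' huAp' hu0' hu''
        have h2 := hA v' hvAp' hv0'
        omega
      · have h1 := hB2 v' hvAp' hv0' hv'
        have h2 := hA u' huAp' hu0'
        omega
    have hcAp : c ∈ S.apery := by
      rw [hN, Finset.mem_sdiff, hAp, Set.Finite.mem_toFinset] at hc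
      exact hc.1
    have hw2pos : 0 ≤ l.getD 2 0 := Nat.zero_le _
    have hcm : m < c := by omega
    set n := c - m with hn
    have hnS : n ∉ S.carrier := fun hmem => hcAp.2 n hmem (by omega)
    have hfrob : (n : ℤ) ≤ S.frob := by
      apply le_csSup
      · refine ⟨(B : ℤ), fun x hx => ?_⟩
        by_contra hxB
        push_neg at hxB
        have hx0 : 0 ≤ x := le_of_lt (lt_of_le_of_lt (Int.natCast_nonneg B) hxB)
        obtain ⟨y, rfl⟩ := Int.eq_ofNat_of_zero_le hx0
        exact hx y (hB y (by exact_mod_cast le_of_lt hxB)) rfl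
      · intro s hs he
        have hsn : s = n := by exact_mod_cast he
        exact hnS (hsn ▸ hs)
    have hlt2 : l.getD 2 0 < n := by omega
    calc (S.w 2 : ℤ) = (l.getD 2 0 : ℤ) := by rw [hwl]
      _ < (n : ℤ) := by exact_mod_cast hlt2
      _ ≤ S.frob := hfrob
  rcases Nat.lt_or_ge b0 c0 with hlt | hge
  · exact main b0 c0 hb0 hc0 hlt
  · exact main c0 b0 hc0 hb0 (by omega)

/-- If `m(S) - ν(S) ≥ 3` then `w_2 < f(S)`. -/
theorem w_two_lt_frob (S : NumericalSemigroup)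
    (h : 3 ≤ S.mult - S.embdim) :
    (S.w 2 : ℤ) < S.frob := by
  exact S.w_two_lt_frob_aux h

end NumericalSemigroup
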